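/- Let p and q be distinct prime numbers and Σ = {a_1, …, a_k} a finite alphabet with k ≥ 1. Define U = {w | for every a ∈ Σ, |w|_a ≡ p − 1 (mod p)} and V = {w | for every a ∈ Σ, |w|_a ≡ q − 1 (mod q)}. Then U and V are commutative group languages with sc(U) = p^k and sc(V) = q^k, the shuffle satisfies U ⧢ V = {w | for every a ∈ Σ, |w|_a ∈ {p + q − 2 + xp + yq : x, y ∈ ℕ}}, and sc(U ⧢ V) = (pq)^k. -/

import Mathlib

open List

def IsCommutativeLang {α : Type} (L : Language α) : Prop :=
  ∀ u v : List α, u ~ v → (u ∈ L ↔ v ∈ L)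

def UpClosure {α : Type} (L : Language α) : Language α :=
  {v | ∃ u ∈ L, u <+ v}

def DownClosure {α : Type} (L : Language α) : Language α :=
  {u | ∃ v ∈ L, u <+ v}

def UpInterior {α : Type} (L : Language α) : Language α :=
  {w | ∃ U : Language α, (∀ x ∈ U, x ∈ L) ∧ UpClosure U = U ∧ w ∈ U}

def DownInterior {α : Type} (L : Language α) : Language α :=
  {w | ∃ U : Language α, (∀ x ∈ U, x ∈ L) ∧ DownClosure U = U ∧ w ∈ U}

def RecognizedBy {α : Type} (L : Language α) (n : ℕ) : Prop :=
  ∃ (σ : Type) (_ : Fintype σ) (M : DFA α σ), Fintype.card σ = n ∧ M.accepts = L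

noncomputable def sc {α : Type} (L : Language α) : ℕ :=
  sInf {n | RecognizedBy L n}

def Nerode {α : Type} (L : Language α) (u v : List α) : Prop :=
  ∀ x : List α, u ++ x ∈ L ↔ v ++ x ∈ L

inductive IsShuffle {α : Type} : List α → List α → List α → Prop
  | nil : IsShuffle [] [] []
  | left (x : α) {u v w : List α} : IsShuffle u v w → IsShuffle (x :: u) v (x :: w)
  | right (y : α) {u v w : List α} : IsShuffle u v w → IsShuffle u (y :: v) (y :: w)

def Shuffle {α : Type} (U V : Language α) : Language α :=
  {w | ∃ u ∈ U, ∃ v ∈ V, IsShuffle u v w}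

def IsPermDFA {α σ : Type} (M : DFA α σ) : Prop :=
  ∀ a : α, Function.Bijective fun q => M.step q a

def IsGroupLang {α : Type} (L : Language α) : Prop :=
  ∃ (σ : Type) (_ : Fintype σ) (M : DFA α σ), IsPermDFA M ∧ M.accepts = L

def wpow {α : Type} (w : List α) (n : ℕ) : List α :=
  (List.replicate n w).flatten

def IsAperiodicDFA {α σ : Type} (M : DFA α σ) : Prop :=
  ∀ (q : σ) (w : List α) (n : ℕ), 1 ≤ n → M.evalFrom q (wpow w n) = q → M.evalFrom q w = q

def IsAperiodicLang {α : Type} (L : Language α) : Prop :=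
  ∃ (σ : Type) (_ : Fintype σ) (M : DFA α σ), IsAperiodicDFA M ∧ M.accepts = L

def ShuffleList {α : Type} : List (Language α) → Language α
  | [] => {([] : List α)}
  | L :: Ls => Shuffle L (ShuffleList Ls)

def UnaryGroupLang {α : Type} (a : α) (U : Language α) : Prop :=
  (∀ w ∈ U, ∀ x ∈ w, x = a) ∧
  ∃ (σ : Type) (_ : Fintype σ) (M : DFA Unit σ), IsPermDFA M ∧
    ∀ n : ℕ, (List.replicate n a ∈ U ↔ List.replicate n () ∈ M.accepts)

def UnaryAperiodicLang {α : Type} (a : α) (U : Language α) : Prop :=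
  (∀ w ∈ U, ∀ x ∈ w, x = a) ∧
  ∃ (σ : Type) (_ : Fintype σ) (M : DFA Unit σ), IsAperiodicDFA M ∧
    ∀ n : ℕ, (List.replicate n a ∈ U ↔ List.replicate n () ∈ M.accepts)


section Helpers

variable {α : Type} [Fintype α] [DecidableEq α]

omit [Fintype α] in
lemma isShuffle_count {u v w : List α} (h : IsShuffle u v w) (a : α) :
    w.count a = u.count a + v.count a := by
  induction h with
  | nil => simp
  | left x h ih => simp [List.count_cons, ih]; split <;> omega
  | right y h ih => simp [List.count_cons, ih]; split <;> omega

omit [Fintype α] in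
lemma exists_shuffle_split (w : List α) (m : α → ℕ) (hm : ∀ a, m a ≤ w.count a) :
    ∃ u v : List α, IsShuffle u v w ∧ (∀ a, u.count a = m a) ∧
      (∀ a, v.count a = w.count a - m a) := by
  induction w generalizing m with
  | nil =>
    refine ⟨[], [], .nil, fun a => ?_, fun a => by simp⟩
    have := hm a; simpa using this.antisymm (Nat.zero_le _) |>.symm
  | cons b t ih =>
    by_cases hb : 1 ≤ m b
    · obtain ⟨u, v, hs, hu, hv⟩ := ih (Function.update m b (m b - 1)) (by
        intro a
        rcases eq_or_ne a b with rfl | hab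
        · have := hm a; simp [List.count_cons] at this ⊢; omega
        · have := hm a; simp [Function.update_of_ne hab, List.count_cons, hab, Ne.symm hab] at this ⊢
          omega)
      refine ⟨b :: u, v, .left b hs, fun a => ?_, fun a => ?_⟩
      · rcases eq_or_ne a b with rfl | hab
        · simp [List.count_cons, hu a]; omega
        · simp [List.count_cons, hab, hu a, Function.update_of_ne hab, Ne.symm hab]
      · rcases eq_or_ne a b with rfl | hab
        · have := hv a; simp [List.count_cons] at this ⊢; omega
        · have := hv a; simp [List.count_cons, hab, Function.update_of_ne hab, Ne.symm hab] at this ⊢; omega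
    · obtain ⟨u, v, hs, hu, hv⟩ := ih m (by
        intro a
        rcases eq_or_ne a b with rfl | hab
        · omega
        · have := hm a; simp [List.count_cons, hab, Ne.symm hab] at this ⊢; omega)
      refine ⟨u, b :: v, .right b hs, hu, fun a => ?_⟩
      rcases eq_or_ne a b with rfl | hab
      · have := hv a; have := hm a; simp [List.count_cons] at *; omega
      · have := hv a; simp [List.count_cons, hab, Ne.symm hab] at this ⊢; omega

noncomputable def wordOf (g : α → ℕ) : List α :=
  (Finset.univ.toList (α := α)).flatMap fun b => List.replicate (g b) b

omit [Fintype α] in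
lemma count_flatMap_replicate (g : α → ℕ) (a : α) (l : List α) (hn : l.Nodup) :
    (l.flatMap fun b => List.replicate (g b) b).count a = if a ∈ l then g a else 0 := by
  induction l with
  | nil => simp
  | cons b t ih =>
    simp only [List.flatMap_cons, List.count_append, List.count_replicate,
      ih (List.nodup_cons.mp hn).2]
    rcases eq_or_ne a b with rfl | hab
    · have : a ∉ t := (List.nodup_cons.mp hn).1
      simp [this]
    · simp [hab, Ne.symm hab]

lemma count_wordOf (g : α → ℕ) (a : α) : (wordOf g).count a = g a := by
  rw [wordOf, count_flatMap_replicate g a _ (Finset.nodup_toList _)]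
  simp

omit [Fintype α] [DecidableEq α] in
lemma card_le_of_distinguishable {σ ι : Type} [Fintype σ] [Fintype ι]
    (M : DFA α σ) (W : ι → List α)
    (h : ∀ i j : ι, i ≠ j → ∃ x : List α,
      ¬((W i ++ x ∈ M.accepts) ↔ (W j ++ x ∈ M.accepts))) :
    Fintype.card ι ≤ Fintype.card σ := by
  apply Fintype.card_le_of_injective (fun i => M.eval (W i))
  intro i j hij
  by_contra hne
  obtain ⟨x, hx⟩ := h i j hne
  apply hx
  simp only [DFA.mem_accepts, DFA.eval, DFA.evalFrom_of_append]
  have hij2 : M.eval (W i) = M.eval (W j) := hij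
  show M.evalFrom (M.eval (W i)) x ∈ M.accept ↔ M.evalFrom (M.eval (W j)) x ∈ M.accept
  rw [hij2]

omit [Fintype α] [DecidableEq α] in
lemma sc_eq_of {L : Language α} {N : ℕ} (hub : RecognizedBy L N)
    (hlb : ∀ n, RecognizedBy L n → N ≤ n) : sc L = N :=
  le_antisymm (Nat.sInf_le hub) (le_csInf ⟨N, hub⟩ hlb)

omit [Fintype α] [DecidableEq α] in
lemma S_of_big {p q : ℕ} (hp : p.Prime) (hq : q.Prime) (hpq : p ≠ q) (n : ℕ)
    (hn : p * q - 1 ≤ n) : ∃ x y : ℕ, n = p + q - 2 + x * p + y * q := by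
  have cop : Nat.Coprime p q := (Nat.coprime_primes hp hq).mpr hpq
  have h2p := hp.two_le; have h2q := hq.two_le
  have hf := frobeniusNumber_pair cop hp.one_lt hq.one_lt
  have hmn : p + q ≤ p * q := Nat.add_le_mul hp.one_lt hq.one_lt
  set m := n - (p + q - 2) with hm
  have hmem : m ∈ AddSubmonoid.closure ({p, q} : Set ℕ) := by
    by_contra hc
    have := hf.2 hc
    omega
  rw [AddSubmonoid.mem_closure_pair] at hmem
  obtain ⟨x, y, hxy⟩ := hmem
  refine ⟨x, y, ?_⟩
  simp only [smul_eq_mul] at hxy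
  omega

omit [Fintype α] [DecidableEq α] in
lemma not_S_frob {p q : ℕ} (hp : p.Prime) (hq : q.Prime) (hpq : p ≠ q) :
    ¬ ∃ x y : ℕ, p * q - 2 = p + q - 2 + x * p + y * q := by
  have cop : Nat.Coprime p q := (Nat.coprime_primes hp hq).mpr hpq
  have h2p := hp.two_le; have h2q := hq.two_le
  have hf := frobeniusNumber_pair cop hp.one_lt hq.one_lt
  have hmn : p + q ≤ p * q := Nat.add_le_mul hp.one_lt hq.one_lt
  rintro ⟨x, y, hxy⟩
  apply hf.1
  rw [AddSubmonoid.mem_closure_pair]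
  exact ⟨x, y, by simp only [smul_eq_mul]; omega⟩

def countDFA (p : ℕ) (P : Set (α → ZMod p)) : DFA α (α → ZMod p) where
  step s a := Function.update s a (s a + 1)
  start := fun _ => 0
  accept := P

lemma countDFA_eval (p : ℕ) (P : Set (α → ZMod p)) (w : List α) :
    (countDFA p P).eval w = fun a => (w.count a : ZMod p) := by
  induction w using List.reverseRec with
  | nil => simp [DFA.eval_nil, countDFA]
  | append_singleton w b ih =>
    rw [DFA.eval_append_singleton, ih]
    funext a
    show Function.update (fun a => ((w.count a : ℕ) : ZMod p)) b _ a = _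
    rcases eq_or_ne a b with rfl | hab
    · simp [List.count_append]
    · simp [Function.update_of_ne hab, List.count_append, List.count_singleton, hab, Ne.symm hab]

lemma countDFA_perm (p : ℕ) (P : Set (α → ZMod p)) : IsPermDFA (countDFA p P) := by
  intro a
  rw [Function.bijective_iff_has_inverse]
  refine ⟨fun s => Function.update s a (s a - 1), fun s => ?_, fun s => ?_⟩ <;>
  · funext b
    rcases eq_or_ne b a with rfl | hb
    · simp [countDFA]
    · simp [countDFA, Function.update_of_ne hb]

def capOf (c : ℕ) (n : ℕ) : Fin (c + 1) := ⟨min n c, by omega⟩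

def capDFA (c : ℕ) (P : Set (α → Fin (c + 1))) : DFA α (α → Fin (c + 1)) where
  step s a := Function.update s a (capOf c ((s a : ℕ) + 1))
  start := fun _ => capOf c 0
  accept := P

lemma capDFA_eval (c : ℕ) (P : Set (α → Fin (c + 1))) (w : List α) :
    (capDFA c P).eval w = fun a => capOf c (w.count a) := by
  induction w using List.reverseRec with
  | nil =>
    funext a; simp [DFA.eval_nil, capDFA]
  | append_singleton w b ih =>
    rw [DFA.eval_append_singleton, ih]
    funext a
    show Function.update (fun a => capOf c (w.count a)) b _ a = _
    rcases eq_or_ne a b with rfl | hab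
    · simp only [Function.update_self, List.count_append, List.count_singleton]
      simp only [capOf]
      apply Fin.ext
      simp; omega
    · simp [Function.update_of_ne hab, List.count_append, List.count_singleton, hab, Ne.symm hab]

omit [Fintype α] [DecidableEq α] in
lemma natCast_mod_char {p : ℕ} (hp : 2 ≤ p) (n : ℕ) :
    ((n : ZMod p) = ((p - 1 : ℕ) : ZMod p)) ↔ n % p = p - 1 := by
  rw [ZMod.natCast_eq_natCast_iff', Nat.mod_eq_of_lt (show p - 1 < p by omega)]

/-- The commutative / group / state-complexity package for the mod-(p) language. -/
lemma modLang_pkg {p : ℕ} (hp : p.Prime) (L : Language α)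
    (hL : L = {w : List α | ∀ a : α, w.count a % p = p - 1}) :
    IsCommutativeLang L ∧ IsGroupLang L ∧ sc L = p ^ Fintype.card α := by
  have h2p := hp.two_le
  haveI : NeZero p := ⟨by omega⟩
  have hcomm : IsCommutativeLang L := by
    intro u v huv
    subst hL
    show (∀ a : α, u.count a % p = p - 1) ↔ (∀ a : α, v.count a % p = p - 1)
    constructor <;> intro h a
    · rw [← huv.count_eq]; exact h a
    · rw [huv.count_eq]; exact h a
  set P : Set (α → ZMod p) := {s | ∀ a, s a = ((p - 1 : ℕ) : ZMod p)} with hP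
  have hacc : (countDFA p P).accepts = L := by
    ext w
    rw [DFA.mem_accepts, countDFA_eval]
    subst hL
    show (∀ a, ((w.count a : ℕ) : ZMod p) = ((p - 1 : ℕ) : ZMod p)) ↔
      ∀ a : α, w.count a % p = p - 1
    exact forall_congr' fun a => natCast_mod_char h2p _
  have hcardZ : Fintype.card (α → ZMod p) = p ^ Fintype.card α := by
    rw [Fintype.card_fun, ZMod.card]
  refine ⟨hcomm, ⟨_, inferInstance, countDFA p P, countDFA_perm p P, hacc⟩, ?_⟩
  apply sc_eq_of
  · exact ⟨_, inferInstance, countDFA p P, hcardZ, hacc⟩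
  · rintro n ⟨σ, instσ, M, hcard, haccM⟩
    have hι : Fintype.card (α → Fin p) = p ^ Fintype.card α := by
      rw [Fintype.card_fun, Fintype.card_fin]
    rw [← hcard, ← hι]
    apply card_le_of_distinguishable M (fun v : α → Fin p => wordOf (fun a => (v a : ℕ)))
    intro v v' hvv
    have : ∃ a0, v a0 ≠ v' a0 := by
      by_contra hc; push_neg at hc; exact hvv (funext hc)
    obtain ⟨a0, ha0⟩ := this
    refine ⟨wordOf (fun a => p - 1 - (v a : ℕ)), ?_⟩
    rw [haccM, hL]
    intro hiff
    have hin : ∀ a : α, (wordOf (fun a => (v a : ℕ)) ++ wordOf fun a => p - 1 - (v a : ℕ)).count a % p = p - 1 := by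
      intro a
      rw [List.count_append, count_wordOf, count_wordOf]
      have := (v a).isLt
      rw [Nat.mod_eq_of_lt (by omega)]
      omega
    have hout := (hiff.mp hin) a0
    rw [List.count_append, count_wordOf, count_wordOf] at hout
    have h1 := (v a0).isLt
    have h2 := (v' a0).isLt
    set N := (v' a0 : ℕ) + (p - 1 - (v a0 : ℕ)) with hN
    rcases lt_or_ge N p with hNp | hNp
    · rw [Nat.mod_eq_of_lt hNp] at hout
      exact ha0 (Fin.ext (by omega))
    · rw [Nat.mod_eq_sub_mod hNp, Nat.mod_eq_of_lt (by omega)] at hout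
      omega

end Helpers

/-- for distinct primes `p ≠ q` and an alphabet of size `k ≥ 1`,
the languages `U = {w | ∀ a, |w|_a ≡ p - 1 (mod p)}` and
`V = {w | ∀ a, |w|_a ≡ q - 1 (mod q)}` are commutative group languages with
`sc U = p ^ k`, `sc V = q ^ k`, the shuffle is
`{w | ∀ a, |w|_a ∈ {p + q - 2 + x p + y q}}` and `sc (U ⧢ V) = (p q) ^ k`. -/
theorem sc_shuffle_group_sharp {α : Type} [Fintype α] [DecidableEq α] (k p q : ℕ)
    (hk : Fintype.card α = k) (hk1 : 1 ≤ k)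
    (hp : p.Prime) (hq : q.Prime) (hpq : p ≠ q)
    (U V : Language α)
    (hU : U = {w : List α | ∀ a : α, w.count a % p = p - 1})
    (hV : V = {w : List α | ∀ a : α, w.count a % q = q - 1}) :
    IsCommutativeLang U ∧ IsGroupLang U ∧
    IsCommutativeLang V ∧ IsGroupLang V ∧
    sc U = p ^ k ∧ sc V = q ^ k ∧
    Shuffle U V =
      {w : List α | ∀ a : α, ∃ x y : ℕ, w.count a = p + q - 2 + x * p + y * q} ∧
    sc (Shuffle U V) = (p * q) ^ k := by
  have h2p := hp.two_le
  have h2q := hq.two_le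
  have hmn : p + q ≤ p * q := Nat.add_le_mul hp.one_lt hq.one_lt
  subst hk
  obtain ⟨hUc, hUg, hUsc⟩ := modLang_pkg hp U hU
  obtain ⟨hVc, hVg, hVsc⟩ := modLang_pkg hq V hV
  have hshuf : Shuffle U V =
      {w : List α | ∀ a : α, ∃ x y : ℕ, w.count a = p + q - 2 + x * p + y * q} := by
    ext w
    constructor
    · rintro ⟨u, hu, v, hv, hs⟩
      intro a
      rw [hU] at hu; rw [hV] at hv
      have hua : u.count a % p = p - 1 := hu a
      have hva : v.count a % q = q - 1 := hv a
      refine ⟨u.count a / p, v.count a / q, ?_⟩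
      have h1 : p * (u.count a / p) + u.count a % p = u.count a := Nat.div_add_mod _ _
      have h2 : q * (v.count a / q) + v.count a % q = v.count a := Nat.div_add_mod _ _
      have h3 := isShuffle_count hs a
      rw [mul_comm (u.count a / p) p, mul_comm (v.count a / q) q]
      set A := p * (u.count a / p); set B := q * (v.count a / q)
      omega
    · intro hw
      change ∀ a : α, ∃ x y : ℕ, w.count a = p + q - 2 + x * p + y * q at hw
      choose x y hxy using hw
      obtain ⟨u, v, hs, hu, hv⟩ := exists_shuffle_split w (fun a => p - 1 + x a * p) (by
        intro a
        show p - 1 + x a * p ≤ w.count a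
        have := hxy a
        set A := x a * p; set B := y a * q
        omega)
      refine ⟨u, ?_, v, ?_, hs⟩
      · rw [hU]
        intro a
        show u.count a % p = p - 1
        have hua : u.count a = p - 1 + x a * p := hu a
        rw [hua, Nat.add_mul_mod_self_right, Nat.mod_eq_of_lt (by omega)]
      · rw [hV]
        intro a
        show v.count a % q = q - 1
        have hva : v.count a = q - 1 + y a * q := by
          have h1 : v.count a = w.count a - (p - 1 + x a * p) := hv a
          have h2 := hxy a
          set A := x a * p; set B := y a * q
          omega
        rw [hva, Nat.add_mul_mod_self_right, Nat.mod_eq_of_lt (by omega)]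
  refine ⟨hUc, hUg, hVc, hVg, hUsc, hVsc, hshuf, ?_⟩
  -- state complexity of the shuffle
  rw [hshuf]
  set c := p * q - 1 with hc
  have hc1 : c + 1 = p * q := by omega
  have hSmin : ∀ n : ℕ, (∃ x y : ℕ, min n c = p + q - 2 + x * p + y * q) ↔
      (∃ x y : ℕ, n = p + q - 2 + x * p + y * q) := by
    intro n
    rcases le_or_gt n c with h | h
    · rw [min_eq_left h]
    · rw [min_eq_right h.le]
      constructor <;> intro _
      · exact S_of_big hp hq hpq n (by omega)
      · exact S_of_big hp hq hpq c (by omega)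
  set P : Set (α → Fin (c + 1)) :=
    {s | ∀ a, ∃ x y : ℕ, ((s a : ℕ)) = p + q - 2 + x * p + y * q} with hP
  have hacc : (capDFA c P).accepts =
      {w : List α | ∀ a : α, ∃ x y : ℕ, w.count a = p + q - 2 + x * p + y * q} := by
    ext w
    rw [DFA.mem_accepts, capDFA_eval]
    show (∀ a, ∃ x y : ℕ, ((capOf c (w.count a) : ℕ)) = p + q - 2 + x * p + y * q) ↔
      ∀ a : α, ∃ x y : ℕ, w.count a = p + q - 2 + x * p + y * q
    refine forall_congr' fun a => ?_
    show (∃ x y : ℕ, min (w.count a) c = _) ↔ _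
    exact hSmin _
  have hcardF : Fintype.card (α → Fin (c + 1)) = (p * q) ^ Fintype.card α := by
    rw [Fintype.card_fun, Fintype.card_fin, hc1]
  apply sc_eq_of
  · exact ⟨_, inferInstance, capDFA c P, hcardF, hacc⟩
  · rintro n ⟨σ, instσ, M, hcard, haccM⟩
    rw [← hcard, ← hcardF]
    apply card_le_of_distinguishable M (fun v : α → Fin (c + 1) => wordOf (fun a => (v a : ℕ)))
    intro v v' hvv
    have : ∃ a0, v a0 ≠ v' a0 := by
      by_contra hcn; push_neg at hcn; exact hvv (funext hcn)
    obtain ⟨a0, ha0⟩ := this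
    have key : ∀ u u' : α → Fin (c + 1), (u a0 : ℕ) < (u' a0 : ℕ) → ∃ xw : List α,
        ¬((wordOf (fun a => (u a : ℕ)) ++ xw ∈ M.accepts) ↔
          (wordOf (fun a => (u' a : ℕ)) ++ xw ∈ M.accepts)) := by
      intro u u' hlt
      refine ⟨wordOf (fun a => if a = a0 then (p * q - 2) - (u a0 : ℕ) else p * q - 1), ?_⟩
      rw [haccM]
      have h1 := (u a0).isLt
      have h2 := (u' a0).isLt
      intro hiff
      have hin : ∀ a : α, ∃ x y : ℕ,
          (wordOf (fun a => (u' a : ℕ)) ++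
            wordOf (fun a => if a = a0 then (p * q - 2) - (u a0 : ℕ) else p * q - 1)).count a
            = p + q - 2 + x * p + y * q := by
        intro a
        rw [List.count_append, count_wordOf, count_wordOf]
        rcases eq_or_ne a a0 with rfl | hne
        · simp only [if_pos rfl, if_true, eq_self_iff_true]
          show ∃ x y : ℕ, (u' a : ℕ) + (p * q - 2 - (u a : ℕ)) = p + q - 2 + x * p + y * q
          exact S_of_big hp hq hpq _ (by omega)
        · simp only [if_neg hne]
          exact S_of_big hp hq hpq _ (by omega)
      have hout := (hiff.mpr hin) a0
      rw [List.count_append, count_wordOf, count_wordOf, if_pos rfl] at hout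
      have hval : (u a0 : ℕ) + (p * q - 2 - (u a0 : ℕ)) = p * q - 2 := by omega
      rw [hval] at hout
      exact not_S_frob hp hq hpq hout
    rcases lt_trichotomy ((v a0 : ℕ)) ((v' a0 : ℕ)) with h | h | h
    · exact key v v' h
    · exact absurd (Fin.ext h) ha0
    · obtain ⟨xw, hxw⟩ := key v' v h
      exact ⟨xw, fun hiff => hxw hiff.symm⟩
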